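/- Let φ : G → G be an endomorphism of a group G and n ∈ ℕ. Let H = φⁿ(G) be the image subgroup of φⁿ. Then R(φ) = R(φ_H), where φ_H : H → H is the restriction of φ to H; more precisely, the φ_H-conjugacy classes of H are in bijection with the φ-conjugacy classes of G via inclusion. -/

import Mathlib

/-- Two elements `a`, `b` of a group are `φ`-conjugate if `b = γ * a * (φ γ)⁻¹` for some `γ`. -/
def phiConj {G : Type*} [Group G] (φ : G → G) (a b : G) : Prop :=
  ∃ γ : G, b = γ * a * (φ γ)⁻¹

/-- The Reidemeister number of `φ`: the number of `φ`-conjugacy classes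
(`0` if there are infinitely many). -/
noncomputable def reidemeisterNumber {G : Type*} [Group G] (φ : G → G) : ℕ :=
  Nat.card (Quot (phiConj φ))

lemma phiConj_equiv {G : Type*} [Group G] (ψ : G →* G) : Equivalence (phiConj ⇑ψ) := by
  constructor
  · intro a; exact ⟨1, by simp⟩
  · rintro a b ⟨γ, rfl⟩
    exact ⟨γ⁻¹, by rw [map_inv]; group⟩
  · rintro a b c ⟨γ₁, rfl⟩ ⟨γ₂, rfl⟩
    refine ⟨γ₂ * γ₁, by rw [map_mul]; group⟩

lemma phiConj_apply {G : Type*} [Group G] (ψ : G →* G) (a : G) : phiConj ⇑ψ a (ψ a) :=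
  ⟨a⁻¹, by simp⟩

lemma phiConj_iterate {G : Type*} [Group G] (ψ : G →* G) (a : G) (n : ℕ) :
    phiConj ⇑ψ a (ψ^[n] a) := by
  induction n with
  | zero => exact (phiConj_equiv ψ).refl a
  | succ k ih =>
    rw [Function.iterate_succ_apply']
    exact (phiConj_equiv ψ).trans ih (phiConj_apply ψ _)

theorem stmt13 {G : Type*} [Group G] (φ : Monoid.End G) (n : ℕ)
    (φH : MonoidHom.range (φ ^ n) →* MonoidHom.range (φ ^ n))
    (hres : ∀ x : MonoidHom.range (φ ^ n), (φH x : G) = φ (x : G)) :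
    (∃ e : Quot (phiConj ⇑φH) ≃ Quot (phiConj ⇑φ),
        ∀ x : MonoidHom.range (φ ^ n), e (Quot.mk _ x) = Quot.mk _ (x : G)) ∧
      reidemeisterNumber ⇑φ = reidemeisterNumber ⇑φH := by
  have hiter : ∀ (k : ℕ) (x : MonoidHom.range (φ ^ n)),
      ((φH^[k] x : MonoidHom.range (φ ^ n)) : G) = φ^[k] (x : G) := by
    intro k
    induction k with
    | zero => intro x; rfl
    | succ m ih =>
      intro x
      rw [Function.iterate_succ_apply', Function.iterate_succ_apply', hres, ih]
  have hmap : ∀ a b : MonoidHom.range (φ ^ n),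
      phiConj ⇑φH a b → phiConj ⇑φ (a : G) (b : G) := by
    rintro a b ⟨γ, rfl⟩
    refine ⟨(γ : G), ?_⟩
    push_cast
    rw [hres]
  let f : Quot (phiConj ⇑φH) → Quot (phiConj ⇑φ) :=
    Quot.map Subtype.val (fun a b h => hmap a b h)
  have hf : ∀ x : MonoidHom.range (φ ^ n), f (Quot.mk _ x) = Quot.mk _ (x : G) := fun x => rfl
  have hsurj : Function.Surjective f := by
    intro q
    induction q using Quot.ind with
    | _ g =>
      refine ⟨Quot.mk _ ⟨(φ ^ n) g, ⟨g, rfl⟩⟩, ?_⟩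
      rw [hf]
      refine Quot.sound ((phiConj_equiv (φ : G →* G)).symm ?_)
      have := phiConj_iterate (φ : G →* G) g n
      simp only [Monoid.End.coe_pow] at this ⊢
      exact this
  have hinj : Function.Injective f := by
    intro p q
    induction p using Quot.ind with
    | _ a =>
      induction q using Quot.ind with
      | _ b =>
        intro h
        rw [hf, hf, Quot.eq] at h
        have h' : phiConj ⇑φ (a : G) (b : G) :=
          (Equivalence.eqvGen_iff (phiConj_equiv (φ : G →* G))).mp h
        obtain ⟨γ, hγ⟩ := h'
        have hcomm : (φ ^ n) (φ γ) = φ ((φ ^ n) γ) := by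
          have h2 : φ ^ n * φ = φ * φ ^ n := by rw [← pow_succ, ← pow_succ']
          exact DFunLike.congr_fun h2 γ
        have key : (φ ^ n) (b : G) = (φ ^ n) γ * (φ ^ n) (a : G) * (φ ((φ ^ n) γ))⁻¹ := by
          rw [hγ, map_mul, map_mul, map_inv, hcomm]
        have hab : phiConj ⇑φH (φH^[n] a) (φH^[n] b) := by
          refine ⟨⟨(φ ^ n) γ, ⟨γ, rfl⟩⟩, Subtype.ext ?_⟩
          push_cast [hiter, hres]
          simpa [Monoid.End.coe_pow] using key
        apply Quot.sound
        exact (phiConj_equiv φH).trans (phiConj_iterate φH a n)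
          ((phiConj_equiv φH).trans hab ((phiConj_equiv φH).symm (phiConj_iterate φH b n)))
  refine ⟨⟨Equiv.ofBijective f ⟨hinj, hsurj⟩, fun x => hf x⟩, ?_⟩
  exact Nat.card_congr (Equiv.ofBijective f ⟨hinj, hsurj⟩).symm
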